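/- Let X be a normed space, F ⊆ X nonempty closed convex, Q ⊆ X nonempty, and r > 0. Suppose x ∈ X satisfies T_Q^F(x) < ∞ and T_Q^F(x) > r, and let Q_r = {u ∈ X : T_Q^F(u) ≤ r}. Then T_Q^F(x) = T_{Q_r}^F(x) + r. -/

import Mathlib

open scoped ENNReal Pointwise

/-- The minimal time function `T_Q^F`. -/
noncomputable def minTime {X : Type*} [NormedAddCommGroup X] [NormedSpace ℝ X]
    (F Q : Set X) (x : X) : ℝ≥0∞ :=
  sInf (ENNReal.ofReal '' {t : ℝ | 0 ≤ t ∧ ∃ f ∈ F, x + t • f ∈ Q})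

lemma minTime_le_of_mem {X : Type*} [NormedAddCommGroup X] [NormedSpace ℝ X]
    (F Q : Set X) (x : X) {t : ℝ} (ht : 0 ≤ t) {f : X} (hf : f ∈ F)
    (h : x + t • f ∈ Q) : minTime F Q x ≤ ENNReal.ofReal t :=
  sInf_le ⟨t, ⟨ht, f, hf, h⟩, rfl⟩

lemma minTime_exists_lt {X : Type*} [NormedAddCommGroup X] [NormedSpace ℝ X]
    (F Q : Set X) (x : X) {c : ℝ≥0∞} (hc : minTime F Q x < c) :
    ∃ t : ℝ, 0 ≤ t ∧ (∃ f ∈ F, x + t • f ∈ Q) ∧ ENNReal.ofReal t < c := by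
  rw [minTime, sInf_lt_iff] at hc
  obtain ⟨b, ⟨t, ⟨ht, hex⟩, rfl⟩, hb⟩ := hc
  exact ⟨t, ht, hex, hb⟩

lemma minTime_triangle {X : Type*} [NormedAddCommGroup X] [NormedSpace ℝ X]
    {F : Set X} (hFconv : Convex ℝ F) (Q : Set X) {t : ℝ} (ht : 0 ≤ t) {f : X}
    (hf : f ∈ F) (x : X) :
    minTime F Q x ≤ ENNReal.ofReal t + minTime F Q (x + t • f) := by
  set u := x + t • f with hu
  rcases eq_or_ne (minTime F Q u) ⊤ with h | h
  · simp [h]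
  refine ENNReal.le_of_forall_pos_le_add fun ε hε _ => ?_
  have hlt : minTime F Q u < minTime F Q u + ε :=
    ENNReal.lt_add_right h (by exact_mod_cast hε.ne')
  obtain ⟨s, hs, ⟨g, hg, hsg⟩, hslt⟩ := minTime_exists_lt F Q u hlt
  rcases eq_or_lt_of_le (add_nonneg ht hs) with hts | hts
  · -- t + s = 0 : t = s = 0, so x ∈ Q
    have ht0 : t = 0 := le_antisymm (by linarith) ht
    have hs0 : s = 0 := le_antisymm (by linarith) hs
    have hxQ : x + (0:ℝ) • f ∈ Q := by
      simpa [hu, ht0, hs0] using hsg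
    calc minTime F Q x ≤ ENNReal.ofReal 0 := minTime_le_of_mem F Q x le_rfl hf hxQ
    _ ≤ _ := by simp
  · -- t + s > 0 : use convexity
    set h' : X := (t / (t + s)) • f + (s / (t + s)) • g with hh'
    have hh'F : h' ∈ F := by
      apply hFconv hf hg (div_nonneg ht hts.le) (div_nonneg hs hts.le)
      field_simp
    have hcomb : (t + s) • h' = t • f + s • g := by
      rw [hh', smul_add, smul_smul, smul_smul]
      rw [mul_div_cancel₀ _ hts.ne', mul_div_cancel₀ _ hts.ne']
    have hmem : x + (t + s) • h' ∈ Q := by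
      rw [hcomb, hu] at *
      rw [← add_assoc]
      exact hsg
    have h1 : minTime F Q x ≤ ENNReal.ofReal (t + s) :=
      minTime_le_of_mem F Q x (add_nonneg ht hs) hh'F hmem
    rw [ENNReal.ofReal_add ht hs] at h1
    calc minTime F Q x ≤ ENNReal.ofReal t + ENNReal.ofReal s := h1
    _ ≤ ENNReal.ofReal t + (minTime F Q u + ε) := by
        exact add_le_add_right hslt.le _
    _ = ENNReal.ofReal t + minTime F Q u + ε := by rw [add_assoc]

theorem minTime_enlargement {X : Type*} [NormedAddCommGroup X] [NormedSpace ℝ X]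
    (F : Set X) (hFne : F.Nonempty) (hFcl : IsClosed F) (hFconv : Convex ℝ F)
    (Q : Set X) (hQne : Q.Nonempty) (r : ℝ) (hr : 0 < r)
    (x : X) (hfin : minTime F Q x ≠ ⊤) (hgt : ENNReal.ofReal r < minTime F Q x) :
    minTime F Q x = minTime F {u : X | minTime F Q u ≤ ENNReal.ofReal r} x + ENNReal.ofReal r := by
  set Qr : Set X := {u : X | minTime F Q u ≤ ENNReal.ofReal r} with hQr
  refine le_antisymm ?_ ?_
  · -- minTime F Q x ≤ minTime F Qr x + r
    rw [show minTime F Qr x = sInf (ENNReal.ofReal '' {t : ℝ | 0 ≤ t ∧ ∃ f ∈ F, x + t • f ∈ Qr})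
          from rfl, ENNReal.sInf_add]
    refine le_iInf₂ fun b hb => ?_
    obtain ⟨t, ⟨ht, f, hf, hfQr⟩, rfl⟩ := hb
    calc minTime F Q x ≤ ENNReal.ofReal t + minTime F Q (x + t • f) :=
          minTime_triangle hFconv Q ht hf x
    _ ≤ ENNReal.ofReal t + ENNReal.ofReal r := add_le_add_right hfQr _
  · -- minTime F Qr x + r ≤ minTime F Q x
    rw [show minTime F Q x = sInf (ENNReal.ofReal '' {t : ℝ | 0 ≤ t ∧ ∃ f ∈ F, x + t • f ∈ Q})
          from rfl]
    refine le_sInf fun b hb => ?_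
    obtain ⟨t, ⟨ht, f, hf, hfQ⟩, rfl⟩ := hb
    have hrt : r ≤ t := by
      by_contra hc
      push_neg at hc
      have : minTime F Q x ≤ ENNReal.ofReal r :=
        (minTime_le_of_mem F Q x ht hf hfQ).trans (ENNReal.ofReal_le_ofReal hc.le)
      exact absurd hgt (not_lt.2 this)
    set u : X := x + (t - r) • f with hudef
    have huQ : u + r • f ∈ Q := by
      rw [hudef, add_assoc, ← add_smul, sub_add_cancel]
      exact hfQ
    have huQr : u ∈ Qr := minTime_le_of_mem F Q u hr.le hf huQ
    have h1 : minTime F Qr x ≤ ENNReal.ofReal (t - r) :=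
      minTime_le_of_mem F Qr x (sub_nonneg.2 hrt) hf huQr
    calc minTime F Qr x + ENNReal.ofReal r ≤ ENNReal.ofReal (t - r) + ENNReal.ofReal r :=
          add_le_add_left h1 _
    _ = ENNReal.ofReal t := by rw [← ENNReal.ofReal_add (sub_nonneg.2 hrt) hr.le, sub_add_cancel]
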